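/- arXiv:1412.2087 — 4 statements merged into one kernel-verified Lean document; each statement's English description precedes it below -/
import Mathlib

section
/- Let K be a kernel on ℝ² and let Φ be a point process on ℝ² that satisfies the DPP Laplace identity with kernel K on compactly supported functions and whose intensity measure is K(x,x)dx. Then for every measurable v : ℝ² → [0,1] such that −log v satisfies conditions (a)–(c) with respect to K, the probability generating functional satisfies E[Π_{x∈Φ} v(x)] = Σ_{n=0}^∞ ((−1)^n/n!) ∫_{(ℝ²)^n} det(K(x_i,x_j))_{1≤i,j≤n} Π_{i=1}^n (1−v(x_i)) dx_1⋯dx_n, where the product Π_{x∈Φ} v(x) runs over the atoms of Φ counted with multiplicity (equivalently it equals exp(∫ log v dΦ)). -/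
open MeasureTheory Measure Metric Filter
open scoped ENNReal NNReal Real Topology BigOperators ComplexOrder

noncomputable section

abbrev E2 : Type := EuclideanSpace ℝ (Fin 2)

/-- `expNeg a = e^{-a}` for `a ∈ [0,∞]`, with `expNeg ∞ = 0`. -/
def expNeg (a : ℝ≥0∞) : ℝ := if a = ∞ then 0 else Real.exp (-a.toReal)

/-- `negLog t = -log t ∈ [0,∞]` for `t ∈ [0,1]`, with `negLog 0 = ∞`. -/
def negLog (t : ℝ) : ℝ≥0∞ := if t = 0 then ∞ else ENNReal.ofReal (-Real.log t)

structure IsKernel (K : E2 → E2 → ℂ) : Prop where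
  continuous : Continuous fun p : E2 × E2 => K p.1 p.2
  hermitian : ∀ x y : E2, K y x = starRingEnd ℂ (K x y)
  locSqInt : ∀ s : Set (E2 × E2), IsCompact s →
    IntegrableOn (fun p : E2 × E2 => ‖K p.1 p.2‖ ^ 2) s
  posSemidef : ∀ (n : ℕ) (x : Fin n → E2),
    (Matrix.of fun i j : Fin n => K (x i) (x j)).PosSemidef

structure SatConds (K : E2 → E2 → ℂ) (f : E2 → ℝ≥0∞) : Prop where
  tendsto_zero : Tendsto f (Bornology.cobounded E2) (nhds 0)
  tail_tendsto_zero : Tendsto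
    (fun r : ℝ => ∫⁻ x in (closedBall (0 : E2) r)ᶜ, ENNReal.ofReal (K x x).re * f x)
    atTop (nhds 0)
  finite_integral : ∫⁻ x : E2, ENNReal.ofReal ((K x x).re * (1 - expNeg (f x))) < ∞

def dppTerm (K : E2 → E2 → ℂ) (g : E2 → ℝ) (n : ℕ) : ℂ :=
  ((-1 : ℂ) ^ n / n.factorial) *
    ∫ x : Fin n → E2,
      (Matrix.of fun i j : Fin n => K (x i) (x j)).det * ∏ i : Fin n, (g (x i) : ℂ)

def DPPLaplaceOnCompact {Ω : Type} [MeasurableSpace Ω] (μ : Measure Ω)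
    (Φ : Ω → Measure E2) (K : E2 → E2 → ℂ) : Prop :=
  ∀ f : E2 → ℝ≥0∞, Measurable f → (∃ s : Set E2, IsCompact s ∧ ∀ x ∉ s, f x = 0) →
    ((∫ ω, expNeg (∫⁻ x, f x ∂(Φ ω)) ∂μ : ℝ) : ℂ) =
      ∑' n : ℕ, dppTerm K (fun x => 1 - expNeg (f x)) n

lemma expNeg_nonneg (a : ℝ≥0∞) : 0 ≤ expNeg a := by
  unfold expNeg; split
  · rfl
  · exact (Real.exp_pos _).le

lemma expNeg_le_one (a : ℝ≥0∞) : expNeg a ≤ 1 := by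
  unfold expNeg; split
  · exact zero_le_one
  · exact Real.exp_le_one_iff.mpr (neg_nonpos.mpr ENNReal.toReal_nonneg)

lemma expNeg_zero : expNeg 0 = 1 := by simp [expNeg]

lemma expNeg_antitone : Antitone expNeg := by
  intro a b hab
  rcases eq_or_ne b ∞ with rfl | hb
  · rw [show expNeg ∞ = 0 from if_pos rfl]
    exact expNeg_nonneg a
  · have ha : a ≠ ∞ := fun h => hb (top_le_iff.mp (h ▸ hab))
    rw [expNeg, expNeg, if_neg ha, if_neg hb]
    exact Real.exp_le_exp.mpr (neg_le_neg (ENNReal.toReal_mono hb hab))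

lemma measurable_expNeg : Measurable expNeg := by
  unfold expNeg
  exact Measurable.ite (measurableSet_singleton ∞) measurable_const
    (Real.measurable_exp.comp (ENNReal.measurable_toReal.neg))

lemma measurable_negLog : Measurable negLog := by
  unfold negLog
  exact Measurable.ite (measurableSet_singleton 0) measurable_const
    (ENNReal.measurable_ofReal.comp (Real.measurable_log.neg))

lemma tendsto_expNeg {a : ℝ≥0∞} : Tendsto expNeg (𝓝 a) (𝓝 (expNeg a)) := by
  rcases eq_or_ne a ∞ with rfl | ha
  · rw [show expNeg ∞ = 0 from if_pos rfl]
    rw [Metric.tendsto_nhds]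
    intro ε hε
    set M : ℝ := max 0 (-Real.log (ε / 2)) with hMdef
    have hM0 : 0 ≤ M := le_max_left _ _
    have hM : Real.exp (-M) < ε := by
      have h1 : -M ≤ Real.log (ε / 2) := by
        have := le_max_right 0 (-Real.log (ε / 2))
        linarith
      calc Real.exp (-M) ≤ Real.exp (Real.log (ε / 2)) := Real.exp_le_exp.mpr h1
        _ = ε / 2 := Real.exp_log (by positivity)
        _ < ε := by linarith
    have hev : ∀ᶠ b in 𝓝 (∞ : ℝ≥0∞), ENNReal.ofReal M < b :=
      eventually_gt_nhds ENNReal.ofReal_lt_top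
    filter_upwards [hev] with b hb
    rw [Real.dist_eq, sub_zero, abs_of_nonneg (expNeg_nonneg b)]
    calc expNeg b ≤ expNeg (ENNReal.ofReal M) := expNeg_antitone hb.le
      _ = Real.exp (-M) := by
          rw [expNeg, if_neg ENNReal.ofReal_ne_top, ENNReal.toReal_ofReal hM0]
      _ < ε := hM
  · have hev : ∀ᶠ b in 𝓝 a, b ≠ ∞ := eventually_ne_nhds ha
    have h1 : Tendsto (fun b : ℝ≥0∞ => Real.exp (-b.toReal)) (𝓝 a)
        (𝓝 (Real.exp (-a.toReal))) :=
      (Real.continuous_exp.continuousAt.tendsto).comp ((ENNReal.tendsto_toReal ha).neg)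
    rw [show expNeg a = Real.exp (-a.toReal) from if_neg ha]
    exact h1.congr' (hev.mono fun b hb => (if_neg hb).symm)

lemma expNeg_negLog {t : ℝ} (h0 : 0 ≤ t) (h1 : t ≤ 1) : expNeg (negLog t) = t := by
  rcases eq_or_lt_of_le h0 with rfl | ht
  · rw [negLog, if_pos rfl, expNeg, if_pos rfl]
  · rw [negLog, if_neg ht.ne', expNeg, if_neg ENNReal.ofReal_ne_top,
      ENNReal.toReal_ofReal (neg_nonneg.mpr (Real.log_nonpos h0 h1)), neg_neg,
      Real.exp_log ht]


section MatrixHelpers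
set_option linter.unusedSectionVars false
variable {m : Type*} [Fintype m] [DecidableEq m]

lemma psd_det_eq {M : Matrix m m ℂ} (hM : M.PosSemidef) :
    M.det = ((∏ i, hM.isHermitian.eigenvalues i : ℝ) : ℂ) := by
  rw [hM.isHermitian.det_eq_prod_eigenvalues]
  push_cast
  rfl

lemma psd_diag_real {M : Matrix m m ℂ} (hM : M.PosSemidef) (i : m) :
    M i i = ((M i i).re : ℂ) := by
  have h := hM.isHermitian
  have : (M i i) = starRingEnd ℂ (M i i) := by
    conv_lhs => rw [← h]
    rfl
  exact (Complex.conj_eq_iff_re.mp this.symm).symm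

lemma psd_diag_nonneg {M : Matrix m m ℂ} (hM : M.PosSemidef) (i : m) :
    0 ≤ (M i i).re := by
  have h := hM.re_dotProduct_nonneg (Pi.single i 1)
  simpa [dotProduct, Matrix.mulVec, Pi.single_apply, Finset.sum_ite_eq,
    Finset.mem_univ] using h


lemma psd_entry_eq_zero {M : Matrix m m ℂ} (hM : M.PosSemidef) {i : m}
    (hi : (M i i).re = 0) (j : m) : M i j = 0 := by
  have hS : (M.submatrix ![i,j] ![i,j]).PosSemidef := hM.submatrix ![i,j]
  have hdet : 0 ≤ (M.submatrix ![i,j] ![i,j]).det.re := by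
    rw [psd_det_eq hS]
    exact_mod_cast Finset.prod_nonneg fun k _ => hS.eigenvalues_nonneg k
  have hji : M j i = starRingEnd ℂ (M i j) := by
    have h := hM.isHermitian
    conv_lhs => rw [← h]
    rfl
  have hMii : M i i = 0 := by
    rw [psd_diag_real hM i, hi]; simp
  rw [Matrix.det_fin_two] at hdet
  simp only [Matrix.submatrix_apply] at hdet
  simp only [Matrix.cons_val_zero, Matrix.cons_val_one, Matrix.head_cons] at hdet
  rw [hMii, hji, zero_mul, Complex.mul_conj] at hdet
  have hdet' : (0:ℝ) ≤ -Complex.normSq (M i j) := by simpa using hdet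
  have : Complex.normSq (M i j) = 0 :=
    le_antisymm (by linarith) (Complex.normSq_nonneg _)
  exact Complex.normSq_eq_zero.mp this


end MatrixHelpers

section Hadamard
open scoped Matrix

lemma psd_hadamard {n : ℕ} {M : Matrix (Fin n) (Fin n) ℂ} (hM : M.PosSemidef) :
    ‖M.det‖ ≤ ∏ i, (M i i).re := by
  by_cases hz : ∃ i, (M i i).re = 0
  · obtain ⟨i, hi⟩ := hz
    rw [Matrix.det_eq_zero_of_row_eq_zero i (psd_entry_eq_zero hM hi)]
    simpa using Finset.prod_nonneg (fun j _ => psd_diag_nonneg hM j)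
  push_neg at hz
  have hpos : ∀ i, 0 < (M i i).re := fun i => (psd_diag_nonneg hM i).lt_of_ne' (hz i)
  rcases Nat.eq_zero_or_pos n with h0 | hn
  · subst h0
    rw [Matrix.det_fin_zero]
    simp
  set d : Fin n → ℝ := fun i => (Real.sqrt ((M i i).re))⁻¹ with hd
  have hdpos : ∀ i, 0 < d i := fun i => inv_pos.mpr (Real.sqrt_pos.mpr (hpos i))
  have hdsq : ∀ i, d i ^ 2 = ((M i i).re)⁻¹ := by
    intro i
    rw [hd]; rw [inv_pow, Real.sq_sqrt (hpos i).le]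
  set D : Matrix (Fin n) (Fin n) ℂ := Matrix.diagonal (fun i => (d i : ℂ)) with hD
  have hDH : Dᴴ = D := by
    rw [hD, Matrix.diagonal_conjTranspose]
    have : star (fun i => (d i : ℂ)) = fun i => (d i : ℂ) := by
      funext i
      simp [Pi.star_apply, Complex.star_def, Complex.conj_ofReal]
    rw [this]
  set N : Matrix (Fin n) (Fin n) ℂ := D * M * Dᴴ with hN
  have hNpsd : N.PosSemidef := hM.mul_mul_conjTranspose_same D
  have hNdiag : ∀ i, N i i = 1 := by
    intro i
    rw [hN, hDH, hD, Matrix.mul_diagonal, Matrix.diagonal_mul, psd_diag_real hM i]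
    rw [mul_comm]
    rw [← mul_assoc]
    push_cast
    rw [← Complex.ofReal_mul, ← Complex.ofReal_mul]
    rw [show d i * d i = d i ^ 2 by ring, hdsq i]
    rw [inv_mul_cancel₀ (hpos i).ne']
    simp
  set lam : Fin n → ℝ := hNpsd.isHermitian.eigenvalues with hlam
  have hlam_nonneg : ∀ i, 0 ≤ lam i := hNpsd.eigenvalues_nonneg
  have htraceN : N.trace = (n : ℂ) := by
    rw [Matrix.trace]
    simp only [Matrix.diag_apply]
    rw [Finset.sum_congr rfl fun i _ => hNdiag i]
    simp
  have htrace : ∑ i, lam i = (n : ℝ) := by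
    have h1 : (Matrix.diagonal (RCLike.ofReal ∘ lam) : Matrix (Fin n) (Fin n) ℂ).trace
        = N.trace := by
      rw [← hNpsd.isHermitian.conjStarAlgAut_star_eigenvectorUnitary,
        Unitary.conjStarAlgAut_star_apply, Matrix.trace_mul_cycle,
        Matrix.mem_unitaryGroup_iff.mp (Matrix.IsHermitian.eigenvectorUnitary hNpsd.isHermitian).2,
        one_mul]
    rw [htraceN, Matrix.trace_diagonal] at h1
    have h2 : ((∑ i, lam i : ℝ) : ℂ) = (n : ℂ) := by
      rw [← h1]
      push_cast
      rfl
    exact_mod_cast h2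
  have hAM : ∏ i, lam i ≤ 1 := by
    have hn0 : (n : ℝ) ≠ 0 := Nat.cast_ne_zero.mpr hn.ne'
    have hw : ∑ _i : Fin n, ((n : ℝ))⁻¹ = 1 := by
      simp [Finset.card_univ]
      field_simp
    have h := Real.geom_mean_le_arith_mean_weighted Finset.univ (fun _ => (n : ℝ)⁻¹) lam
      (fun i _ => by positivity) hw (fun i _ => hlam_nonneg i)
    have hsum : ∑ i, (n : ℝ)⁻¹ * lam i = 1 := by
      rw [← Finset.mul_sum, htrace]
      field_simp
    have hprod : ∏ i, lam i = (∏ i, lam i ^ ((n : ℝ)⁻¹)) ^ (n : ℕ) := by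
      rw [← Finset.prod_pow]
      refine Finset.prod_congr rfl fun i _ => ?_
      rw [← Real.rpow_natCast (lam i ^ ((n : ℝ)⁻¹)) n, ← Real.rpow_mul (hlam_nonneg i),
        inv_mul_cancel₀ hn0, Real.rpow_one]
    rw [hprod]
    exact pow_le_one₀ (Finset.prod_nonneg fun i _ => Real.rpow_nonneg (hlam_nonneg i) _)
      (h.trans_eq hsum)
  have hnormN : ‖N.det‖ ≤ 1 := by
    rw [psd_det_eq hNpsd, Complex.norm_real,
      Real.norm_of_nonneg (Finset.prod_nonneg fun i _ => hlam_nonneg i)]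
    exact hAM
  have hnormD : ‖(∏ i, (d i : ℂ))‖ = ∏ i, d i := by
    rw [← Complex.ofReal_prod, Complex.norm_real,
      Real.norm_of_nonneg (Finset.prod_nonneg fun i _ => (hdpos i).le)]
  have hdet_rel : ‖N.det‖ = (∏ i, d i) ^ 2 * ‖M.det‖ := by
    rw [hN, hDH, hD, Matrix.det_mul, Matrix.det_mul, Matrix.det_diagonal, norm_mul, norm_mul,
      hnormD]
    ring
  have hprodd : (∏ i, d i) ^ 2 = ∏ i, ((M i i).re)⁻¹ := by
    rw [← Finset.prod_pow]
    exact Finset.prod_congr rfl fun i _ => hdsq i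
  have hkey : ‖M.det‖ * ∏ i, ((M i i).re)⁻¹ ≤ 1 := by
    rw [← hprodd, mul_comm, ← hdet_rel]
    exact hnormN
  have hcancel : (∏ i, ((M i i).re)⁻¹) * ∏ i, (M i i).re = 1 := by
    rw [← Finset.prod_mul_distrib]
    exact Finset.prod_eq_one fun i _ => inv_mul_cancel₀ (hpos i).ne'
  calc ‖M.det‖ = ‖M.det‖ * ((∏ i, ((M i i).re)⁻¹) * ∏ i, (M i i).re) := by rw [hcancel, mul_one]
    _ = (‖M.det‖ * ∏ i, ((M i i).re)⁻¹) * ∏ i, (M i i).re := by ring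
    _ ≤ 1 * ∏ i, (M i i).re := by
        exact mul_le_mul_of_nonneg_right hkey (Finset.prod_nonneg fun i _ => (hpos i).le)
    _ = ∏ i, (M i i).re := one_mul _

end Hadamard


lemma det_prod_bound (K : E2 → E2 → ℂ)
    (hKpsd : ∀ (n : ℕ) (x : Fin n → E2),
      (Matrix.of fun i j : Fin n => K (x i) (x j)).PosSemidef)
    (g g' : E2 → ℝ) (hg'0 : ∀ x, 0 ≤ g' x) (hg'le : ∀ x, g' x ≤ g x) {n : ℕ}
    (x : Fin n → E2) :
    ‖(Matrix.of fun i j : Fin n => K (x i) (x j)).det * ∏ i, (g' (x i) : ℂ)‖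
      ≤ ∏ i, (K (x i) (x i)).re * g (x i) := by
  have hDnn : ∀ i, 0 ≤ (K (x i) (x i)).re := fun i => psd_diag_nonneg (hKpsd n x) i
  rw [norm_mul]
  have h1 : ‖(Matrix.of fun i j : Fin n => K (x i) (x j)).det‖
      ≤ ∏ i, (K (x i) (x i)).re := psd_hadamard (hKpsd n x)
  have h2 : ‖∏ i, (g' (x i) : ℂ)‖ = ∏ i, g' (x i) := by
    rw [← Complex.ofReal_prod, Complex.norm_real,
      Real.norm_of_nonneg (Finset.prod_nonneg fun i _ => hg'0 _)]
  rw [h2]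
  have h3 : ∏ i, g' (x i) ≤ ∏ i, g (x i) :=
    Finset.prod_le_prod (fun i _ => hg'0 _) (fun i _ => hg'le _)
  calc ‖(Matrix.of fun i j : Fin n => K (x i) (x j)).det‖ * ∏ i, g' (x i)
      ≤ (∏ i, (K (x i) (x i)).re) * ∏ i, g (x i) :=
        mul_le_mul h1 h3 (Finset.prod_nonneg fun i _ => hg'0 _)
          (Finset.prod_nonneg fun i _ => hDnn i)
    _ = ∏ i, (K (x i) (x i)).re * g (x i) := Finset.prod_mul_distrib.symm

lemma dppTerm_bound (K : E2 → E2 → ℂ)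
    (hKpsd : ∀ (n : ℕ) (x : Fin n → E2),
      (Matrix.of fun i j : Fin n => K (x i) (x j)).PosSemidef)
    (g g' : E2 → ℝ) (hg'0 : ∀ x, 0 ≤ g' x) (hg'le : ∀ x, g' x ≤ g x)
    (hgint : Integrable (fun x => (K x x).re * g x)) (n : ℕ) :
    ‖dppTerm K g' n‖ ≤ (∫ x, (K x x).re * g x) ^ n / n.factorial := by
  rw [dppTerm, norm_mul]
  have hc : ‖((-1 : ℂ) ^ n / (n.factorial : ℂ))‖ = 1 / n.factorial := by
    simp
  have hbd_int : Integrable (fun x : Fin n → E2 => ∏ i, (K (x i) (x i)).re * g (x i)) :=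
    Integrable.fintype_prod (f := fun (_ : Fin n) (y : E2) => (K y y).re * g y)
      (fun _ => hgint)
  have hnorm : ‖∫ x : Fin n → E2,
        (Matrix.of fun i j : Fin n => K (x i) (x j)).det * ∏ i, (g' (x i) : ℂ)‖
      ≤ ∫ x : Fin n → E2, ∏ i, (K (x i) (x i)).re * g (x i) :=
    norm_integral_le_of_norm_le hbd_int
      (Filter.Eventually.of_forall fun x => det_prod_bound K hKpsd g g' hg'0 hg'le x)
  have heq : ∫ x : Fin n → E2, ∏ i, ((K (x i) (x i)).re * g (x i))
      = (∫ x, (K x x).re * g x) ^ n := by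
    rw [MeasureTheory.integral_fintype_prod_volume_eq_pow (ι := Fin n) (fun y : E2 => (K y y).re * g y)]
    simp
  rw [heq] at hnorm
  rw [hc]
  calc 1 / (n.factorial : ℝ) * ‖_‖ ≤ 1 / (n.factorial : ℝ) * (∫ x, (K x x).re * g x) ^ n :=
        mul_le_mul_of_nonneg_left hnorm (by positivity)
    _ = (∫ x, (K x x).re * g x) ^ n / n.factorial := by ring


/-- Probability generating functional of a DPP: for measurable
`v : ℝ² → [0,1]` such that `-log v` satisfies conditions (a)–(c) with respect to `K`,
`E[∏_{x∈Φ} v(x)] = Σ_n ((-1)^n/n!) ∫ det(K(x_i,x_j)) ∏ (1 - v(x_i)) dx`, where the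
product over the atoms of `Φ` (with multiplicity) is `exp(∫ log v dΦ)`. -/
theorem stmt_1 {Ω : Type} [MeasurableSpace Ω] (μ : Measure Ω) [IsProbabilityMeasure μ]
    (K : E2 → E2 → ℂ) (hK : IsKernel K)
    (Φ : Ω → Measure E2)
    (hΦmeas : ∀ g : E2 → ℝ≥0∞, Measurable g → Measurable fun ω => ∫⁻ x, g x ∂(Φ ω))
    (hΦlocfin : ∀ ω, ∀ s : Set E2, IsCompact s → Φ ω s < ∞)
    (hintensity : ∀ g : E2 → ℝ≥0∞, Measurable g →
      ∫⁻ ω, (∫⁻ x, g x ∂(Φ ω)) ∂μ = ∫⁻ x : E2, ENNReal.ofReal (K x x).re * g x)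
    (hLaplace : DPPLaplaceOnCompact μ Φ K)
    (v : E2 → ℝ) (hv : Measurable v) (hv01 : ∀ x, v x ∈ Set.Icc (0 : ℝ) 1)
    (hconds : SatConds K fun x => negLog (v x)) :
    ((∫ ω, expNeg (∫⁻ x, negLog (v x) ∂(Φ ω)) ∂μ : ℝ) : ℂ) =
      ∑' n : ℕ, dppTerm K (fun x => 1 - v x) n := by
  classical
  set f : E2 → ℝ≥0∞ := fun x => negLog (v x) with hf
  have hfmeas : Measurable f := measurable_negLog.comp hv
  set g : E2 → ℝ := fun x => 1 - v x with hg
  have hgmeas : Measurable g := measurable_const.sub hv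
  have hg0 : ∀ x, 0 ≤ g x := fun x => by
    have := (hv01 x).2; simp only [hg]; linarith
  have hexpNeg_f : ∀ x, expNeg (f x) = v x := fun x =>
    expNeg_negLog (hv01 x).1 (hv01 x).2
  have hDcont : Continuous fun x : E2 => (K x x).re :=
    Complex.continuous_re.comp (hK.continuous.comp (continuous_id.prodMk continuous_id))
  have hDnn : ∀ x, 0 ≤ (K x x).re := fun x =>
    psd_diag_nonneg (hK.posSemidef 1 fun _ => x) 0
  have hfin : ∫⁻ x : E2, ENNReal.ofReal ((K x x).re * g x) < ∞ := by
    have h := hconds.finite_integral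
    have heq : ∀ x : E2, (K x x).re * (1 - expNeg (negLog (v x))) = (K x x).re * g x := by
      intro x
      rw [show negLog (v x) = f x from rfl, hexpNeg_f x]
    calc ∫⁻ x : E2, ENNReal.ofReal ((K x x).re * g x)
        = ∫⁻ x : E2, ENNReal.ofReal ((K x x).re * (1 - expNeg (negLog (v x)))) := by
          refine lintegral_congr fun x => ?_
          rw [heq x]
      _ < ∞ := h
  have hgint : Integrable fun x => (K x x).re * g x := by
    refine ⟨(hDcont.measurable.mul hgmeas).aestronglyMeasurable, ?_⟩
    rw [hasFiniteIntegral_iff_ofReal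
      (Filter.Eventually.of_forall fun x => mul_nonneg (hDnn x) (hg0 x))]
    exact hfin
  set C : ℝ := ∫ x, (K x x).re * g x with hC
  set F : ℕ → E2 → ℝ≥0∞ := fun n x => (closedBall (0 : E2) n).indicator f x with hF
  have hFmeas : ∀ n, Measurable (F n) := fun n => hfmeas.indicator measurableSet_closedBall
  set G : ℕ → E2 → ℝ := fun n x => (closedBall (0 : E2) n).indicator g x with hG
  have hGmeas : ∀ n, Measurable (G n) := fun n => hgmeas.indicator measurableSet_closedBall
  have hFG : ∀ n x, 1 - expNeg (F n x) = G n x := by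
    intro n x
    by_cases hx : x ∈ closedBall (0 : E2) (n : ℝ)
    · simp only [hF, hG, Set.indicator_of_mem hx]
      rw [hexpNeg_f x]
    · simp [hF, hG, Set.indicator_of_notMem hx, expNeg_zero]
  have hG0 : ∀ n x, 0 ≤ G n x := fun n x => Set.indicator_nonneg (fun y _ => hg0 y) x
  have hGle : ∀ n x, G n x ≤ g x := fun n x => Set.indicator_le_self' (fun y _ => hg0 y) x
  have hLap : ∀ n : ℕ, ((∫ ω, expNeg (∫⁻ x, F n x ∂Φ ω) ∂μ : ℝ) : ℂ)
      = ∑' m : ℕ, dppTerm K (G n) m := by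
    intro n
    have h := hLaplace (F n) (hFmeas n)
      ⟨closedBall (0 : E2) n, isCompact_closedBall _ _,
        fun x hx => Set.indicator_of_notMem hx f⟩
    rw [h]
    refine tsum_congr fun m => ?_
    have : (fun x => 1 - expNeg (F n x)) = G n := funext fun x => hFG n x
    rw [this]
  -- LHS convergence
  have hLHS : Tendsto (fun n : ℕ => ∫ ω, expNeg (∫⁻ x, F n x ∂Φ ω) ∂μ) atTop
      (𝓝 (∫ ω, expNeg (∫⁻ x, f x ∂Φ ω) ∂μ)) := by
    refine tendsto_integral_of_dominated_convergence (fun _ => (1 : ℝ))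
      (fun n => (measurable_expNeg.comp (hΦmeas (F n) (hFmeas n))).aestronglyMeasurable)
      (integrable_const 1) (fun n => Filter.Eventually.of_forall fun ω => ?_)
      (Filter.Eventually.of_forall fun ω => ?_)
    · rw [Real.norm_of_nonneg (expNeg_nonneg _)]
      exact expNeg_le_one _
    · have hmono : Monotone fun n : ℕ => ∫⁻ x, F n x ∂Φ ω := by
        intro a b hab
        refine lintegral_mono fun x => ?_
        exact Set.indicator_le_indicator_of_subset
          (closedBall_subset_closedBall (by exact_mod_cast hab)) (fun _ => zero_le) x
      have hmono' : Monotone F := by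
        intro a b hab x
        exact Set.indicator_le_indicator_of_subset
          (closedBall_subset_closedBall (by exact_mod_cast hab)) (fun _ => zero_le) x
      have hsup : ⨆ n : ℕ, ∫⁻ x, F n x ∂Φ ω = ∫⁻ x, f x ∂Φ ω := by
        rw [← lintegral_iSup (fun n => hFmeas n) hmono']
        refine lintegral_congr fun x => ?_
        apply le_antisymm
        · exact iSup_le fun n => Set.indicator_le_self _ _ x
        · obtain ⟨n, hn⟩ := exists_nat_ge ‖x‖
          have hx : x ∈ closedBall (0 : E2) (n : ℝ) := by
            rw [mem_closedBall, dist_zero_right]; exact hn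
          exact le_iSup_of_le n (le_of_eq (Set.indicator_of_mem hx f).symm)
      have h1 := tendsto_atTop_iSup hmono
      rw [hsup] at h1
      exact tendsto_expNeg.comp h1
  have hLHS' : Tendsto (fun n : ℕ => ((∫ ω, expNeg (∫⁻ x, F n x ∂Φ ω) ∂μ : ℝ) : ℂ)) atTop
      (𝓝 ((∫ ω, expNeg (∫⁻ x, f x ∂Φ ω) ∂μ : ℝ) : ℂ)) :=
    Complex.continuous_ofReal.continuousAt.tendsto.comp hLHS
  -- RHS convergence
  have hRHS : Tendsto (fun n : ℕ => ∑' m : ℕ, dppTerm K (G n) m) atTop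
      (𝓝 (∑' m : ℕ, dppTerm K g m)) := by
    refine tendsto_tsum_of_dominated_convergence (bound := fun m => C ^ m / m.factorial)
      (Real.summable_pow_div_factorial C) (fun m => ?_)
      (Filter.Eventually.of_forall fun n m =>
        dppTerm_bound K hK.posSemidef g (G n) (hG0 n) (hGle n) hgint m)
    -- per-term convergence
    simp only [dppTerm]
    have hInt : Tendsto (fun n : ℕ => ∫ x : Fin m → E2,
        (Matrix.of fun i j : Fin m => K (x i) (x j)).det * ∏ i, (G n (x i) : ℂ)) atTop
        (𝓝 (∫ x : Fin m → E2,
          (Matrix.of fun i j : Fin m => K (x i) (x j)).det * ∏ i, (g (x i) : ℂ))) := ?_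
    swap
    refine tendsto_integral_of_dominated_convergence
      (fun x : Fin m → E2 => ∏ i, (K (x i) (x i)).re * g (x i)) (fun n => ?_)
      (Integrable.fintype_prod (f := fun (_ : Fin m) (y : E2) => (K y y).re * g y)
        fun _ => hgint)
      (fun n => Filter.Eventually.of_forall fun x =>
        det_prod_bound K hK.posSemidef g (G n) (hG0 n) (hGle n) x)
      (Filter.Eventually.of_forall fun x => ?_)
    · have hdetc : Continuous fun x : Fin m → E2 =>
          (Matrix.of fun i j : Fin m => K (x i) (x j)).det := by
        apply Continuous.matrix_det
        apply continuous_matrix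
        intro i j
        simp only [Matrix.of_apply]
        have h1 : Continuous fun x : Fin m → E2 => (x i, x j) :=
          (continuous_apply i).prodMk (continuous_apply j)
        exact hK.continuous.comp h1
      refine AEStronglyMeasurable.mul hdetc.aestronglyMeasurable ?_
      · refine Measurable.aestronglyMeasurable ?_
        refine Finset.measurable_prod Finset.univ fun i _ => ?_
        exact Complex.measurable_ofReal.comp ((hGmeas n).comp (measurable_pi_apply i))
    · -- pointwise eventual equality
      set N : ℕ := Finset.univ.sup fun i => ⌈‖x i‖⌉₊ with hN
      refine Tendsto.congr' ?_ tendsto_const_nhds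
      rw [Filter.EventuallyEq, eventually_atTop]
      refine ⟨N, fun n hn => ?_⟩
      have hmem : ∀ i, G n (x i) = g (x i) := by
        intro i
        have h1 : ‖x i‖ ≤ (N : ℝ) := by
          calc ‖x i‖ ≤ (⌈‖x i‖⌉₊ : ℝ) := Nat.le_ceil _
            _ ≤ (N : ℝ) := by
                have := Finset.le_sup (f := fun i => ⌈‖x i‖⌉₊) (Finset.mem_univ i)
                rw [hN]
                exact_mod_cast this
        have : x i ∈ closedBall (0 : E2) (n : ℝ) := by
          rw [mem_closedBall, dist_zero_right]
          exact h1.trans (by exact_mod_cast hn)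
        exact Set.indicator_of_mem this g
      rw [show (∏ i, (g (x i) : ℂ)) = ∏ i, (G n (x i) : ℂ) from
        Finset.prod_congr rfl fun i _ => by rw [hmem i]]
    exact hInt.const_mul _
  -- conclude
  have hseq : Tendsto (fun n : ℕ => ((∫ ω, expNeg (∫⁻ x, F n x ∂Φ ω) ∂μ : ℝ) : ℂ)) atTop
      (𝓝 (∑' m : ℕ, dppTerm K g m)) := by
    refine hRHS.congr fun n => ?_
    rw [hLap n]
  exact tendsto_nhds_unique hLHS' hseq
end
end

section
/- Let K be a kernel on ℝ² and let Φ be a point process on ℝ² that satisfies the DPP Laplace identity with kernel K on compactly supported functions. Then for every r ≥ 0 the empty space function F(r) = P(Φ(B(0,r)) ≥ 1), where B(0,r) is the closed ball of radius r centered at the origin, is given by F(r) = Σ_{n=1}^∞ ((−1)^{n−1}/n!) ∫_{(B(0,r))^n} det(K(x_i,x_j))_{1≤i,j≤n} dx_1⋯dx_n; equivalently, the void probability is P(Φ(B(0,r)) = 0) = Σ_{n=0}^∞ ((−1)^n/n!) ∫_{(B(0,r))^n} det(K(x_i,x_j))_{1≤i,j≤n} dx_1⋯dx_n. -/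
open MeasureTheory Measure Metric Filter
open scoped ENNReal NNReal Real Topology BigOperators ComplexOrder

noncomputable section

/-- `∫_{(B(0,r))^n} det(K(x_i,x_j))_{1≤i,j≤n} dx_1⋯dx_n`. -/
def ballDetInt (K : E2 → E2 → ℂ) (r : ℝ) (n : ℕ) : ℂ :=
  ∫ x in Set.univ.pi fun _ : Fin n => closedBall (0 : E2) r,
    (Matrix.of fun i j : Fin n => K (x i) (x j)).det

lemma trace_eq_sum_eig {n : ℕ} {A : Matrix (Fin n) (Fin n) ℂ} (hA : A.IsHermitian) :
    A.trace = ∑ i, (hA.eigenvalues i : ℂ) := by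
  calc A.trace
      = ((Matrix.IsHermitian.eigenvectorUnitary hA : Matrix (Fin n) (Fin n) ℂ) *
          Matrix.diagonal (RCLike.ofReal ∘ hA.eigenvalues) *
          (star (Matrix.IsHermitian.eigenvectorUnitary hA : Matrix (Fin n) (Fin n) ℂ))).trace := by
        exact congrArg Matrix.trace hA.spectral_theorem
    _ = (Matrix.diagonal (RCLike.ofReal ∘ hA.eigenvalues)).trace := by
        rw [Matrix.trace_mul_cycle,
          (Matrix.mem_unitaryGroup_iff').mp (Matrix.IsHermitian.eigenvectorUnitary hA).2,
          Matrix.one_mul]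
    _ = ∑ i, (hA.eigenvalues i : ℂ) := by simp [Matrix.trace_diagonal]

lemma det_bound {n : ℕ} (K : E2 → E2 → ℂ) (M : ℝ)
    (x : Fin n → E2) (hPSD' : (Matrix.of fun i j : Fin n => K (x i) (x j)).PosSemidef)
    (hx : ∀ i, ‖K (x i) (x i)‖ ≤ M) :
    ‖(Matrix.of fun i j : Fin n => K (x i) (x j)).det‖ ≤ M ^ n := by
  rcases Nat.eq_zero_or_pos n with hn | hn
  · subst hn; simp [Matrix.det_fin_zero]
  set A := Matrix.of fun i j : Fin n => K (x i) (x j) with hAdef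
  have hH : A.IsHermitian := hPSD'.1
  have hev : ∀ i, 0 ≤ hH.eigenvalues i := fun i => hPSD'.eigenvalues_nonneg i
  have hsum : ∑ i, hH.eigenvalues i ≤ n * M := by
    have h1 : ((∑ i, hH.eigenvalues i : ℝ) : ℂ) = A.trace := by
      rw [trace_eq_sum_eig hH]; push_cast; rfl
    have h2 : (∑ i, hH.eigenvalues i : ℝ) = (A.trace).re := by
      rw [← h1]; simp
    rw [h2, Matrix.trace, Complex.re_sum]
    calc ∑ i, (A.diag i).re ≤ ∑ i : Fin n, M := by
          refine Finset.sum_le_sum fun i _ => ?_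
          exact le_trans (Complex.re_le_norm _) (hx i)
      _ = n * M := by simp [mul_comm]
  have hdet : A.det = ((∏ i, hH.eigenvalues i : ℝ) : ℂ) := by
    rw [hH.det_eq_prod_eigenvalues]; push_cast; rfl
  rw [hdet, Complex.norm_real, Real.norm_eq_abs,
    abs_of_nonneg (Finset.prod_nonneg fun i _ => hev i)]
  have hn' : (0:ℝ) < n := by exact_mod_cast hn
  have hamgm := Real.geom_mean_le_arith_mean_weighted Finset.univ
    (fun _ => (n : ℝ)⁻¹) hH.eigenvalues (fun i _ => by positivity)
    (by simp [Finset.card_univ, mul_inv_cancel₀ hn'.ne']) (fun i _ => hev i)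
  have hle : ∏ i, hH.eigenvalues i ^ ((n:ℝ)⁻¹) ≤ M := by
    refine hamgm.trans ?_
    rw [← Finset.mul_sum, inv_mul_le_iff₀ hn']
    nlinarith [hsum]
  have hprod : (∏ i, hH.eigenvalues i ^ ((n:ℝ)⁻¹)) ^ n = ∏ i, hH.eigenvalues i := by
    rw [← Finset.prod_pow]
    refine Finset.prod_congr rfl fun i _ => ?_
    rw [← Real.rpow_natCast (hH.eigenvalues i ^ ((n:ℝ)⁻¹)) n, ← Real.rpow_mul (hev i),
      inv_mul_cancel₀ hn'.ne', Real.rpow_one]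
  calc ∏ i, hH.eigenvalues i = (∏ i, hH.eigenvalues i ^ ((n:ℝ)⁻¹)) ^ n := hprod.symm
    _ ≤ M ^ n := pow_le_pow_left₀ (Finset.prod_nonneg fun i _ => Real.rpow_nonneg (hev i) _) hle n

lemma dppTerm_indicator (K : E2 → E2 → ℂ) (r s : ℝ) (n : ℕ) :
    dppTerm K ((closedBall (0:E2) r).indicator fun _ => s) n
      = ((-1 : ℂ) ^ n / n.factorial) * ((s:ℂ) ^ n * ballDetInt K r n) := by
  unfold dppTerm ballDetInt
  congr 1
  have key : ∀ x : Fin n → E2,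
      ((Matrix.of fun i j : Fin n => K (x i) (x j)).det *
        ∏ i, (((closedBall (0:E2) r).indicator (fun _ => s) (x i) : ℝ) : ℂ))
      = (Set.univ.pi fun _ : Fin n => closedBall (0:E2) r).indicator
          (fun y => (s:ℂ)^n * (Matrix.of fun i j : Fin n => K (y i) (y j)).det) x := by
    intro x
    by_cases hx : ∀ i, x i ∈ closedBall (0:E2) r
    · have hmem : x ∈ Set.univ.pi fun _ : Fin n => closedBall (0:E2) r := fun i _ => hx i
      rw [Set.indicator_of_mem hmem]
      have h1 : ∀ i : Fin n, i ∈ Finset.univ →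
          (((closedBall (0:E2) r).indicator (fun _ => s) (x i) : ℝ) : ℂ) = (s:ℂ) := fun i _ => by
        rw [Set.indicator_of_mem (hx i)]
      rw [Finset.prod_congr rfl h1, Finset.prod_const, Finset.card_univ, Fintype.card_fin,
        mul_comm]
    · push_neg at hx
      obtain ⟨i, hi⟩ := hx
      have hmem : x ∉ Set.univ.pi fun _ : Fin n => closedBall (0:E2) r := by
        intro h; exact hi (h i (Set.mem_univ i))
      rw [Set.indicator_of_notMem hmem, Finset.prod_eq_zero (Finset.mem_univ i)]
      · ring
      · rw [Set.indicator_of_notMem hi]; norm_num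
  simp_rw [key]
  rw [integral_indicator (MeasurableSet.univ_pi fun _ => measurableSet_closedBall),
    integral_const_mul]

lemma ballDetInt_zero (K : E2 → E2 → ℂ) (r : ℝ) : ballDetInt K r 0 = 1 := by
  unfold ballDetInt
  have h1 : (Set.univ.pi fun _ : Fin 0 => closedBall (0:E2) r) = Set.univ := by
    ext x; simp
  rw [h1, Measure.restrict_univ]
  have h2 : (fun x : Fin 0 → E2 => (Matrix.of fun i j : Fin 0 => K (x i) (x j)).det)
      = fun _ => (1:ℂ) := by
    funext x; exact Matrix.det_fin_zero
  rw [h2, integral_const]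
  have h3 : (volume (Set.univ : Set (Fin 0 → E2))) = 1 := by
    rw [MeasureTheory.volume_pi, Measure.pi_univ]
    simp
  simp [measureReal_def, h3]

lemma expNeg_top : expNeg ⊤ = 0 := by simp [expNeg]

/-- For a point process `Φ` satisfying the DPP Laplace identity with
kernel `K` on compactly supported functions, the empty space function
`F(r) = P(Φ(B(0,r)) ≥ 1)` equals `Σ_{n≥1} ((-1)^{n-1}/n!) ∫_{B(0,r)^n} det(K(x_i,x_j)) dx`,
and the void probability `P(Φ(B(0,r)) = 0)` equals
`Σ_{n≥0} ((-1)^n/n!) ∫_{B(0,r)^n} det(K(x_i,x_j)) dx`. -/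
theorem stmt_3 {Ω : Type} [MeasurableSpace Ω] (μ : Measure Ω) [IsProbabilityMeasure μ]
    (K : E2 → E2 → ℂ) (hK : IsKernel K)
    (Φ : Ω → Measure E2)
    (hΦmeas : ∀ g : E2 → ℝ≥0∞, Measurable g → Measurable fun ω => ∫⁻ x, g x ∂(Φ ω))
    (hΦlocfin : ∀ ω, ∀ s : Set E2, IsCompact s → Φ ω s < ∞)
    (hLaplace : DPPLaplaceOnCompact μ Φ K)
    (r : ℝ) (hr : 0 ≤ r) :
    (((μ {ω | 1 ≤ Φ ω (closedBall (0 : E2) r)}).toReal : ℝ) : ℂ) =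
      ∑' n : ℕ, ((-1 : ℂ) ^ n / (n + 1).factorial) * ballDetInt K r (n + 1) ∧
    (((μ {ω | Φ ω (closedBall (0 : E2) r) = 0}).toReal : ℝ) : ℂ) =
      ∑' n : ℕ, ((-1 : ℂ) ^ n / n.factorial) * ballDetInt K r n := by
  set B : Set E2 := closedBall (0 : E2) r with hBdef
  have hB : MeasurableSet B := measurableSet_closedBall
  have hBc : IsCompact B := isCompact_closedBall _ _
  set X : Ω → ℝ≥0∞ := fun ω => Φ ω B with hXdef
  have hXfin : ∀ ω, X ω ≠ ∞ := fun ω => (hΦlocfin ω B hBc).ne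
  have hX : Measurable X := by
    have h := hΦmeas (B.indicator fun _ => 1) (measurable_const.indicator hB)
    have heq : (fun ω => ∫⁻ x, B.indicator (fun _ => (1:ℝ≥0∞)) x ∂(Φ ω)) = X := by
      funext ω; rw [lintegral_indicator_const hB, one_mul]
    rwa [heq] at h
  set cn : ℕ → ℂ := fun n => ((-1 : ℂ) ^ n / n.factorial) * ballDetInt K r n with hcndef
  -- the Laplace identity specialized to indicator functions
  have laplace_t : ∀ t : ℝ≥0∞,
      ((∫ ω, expNeg (t * X ω) ∂μ : ℝ) : ℂ)
        = ∑' n, cn n * (((1 - expNeg t : ℝ)) : ℂ) ^ n := by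
    intro t
    have h := hLaplace (B.indicator fun _ => t) (measurable_const.indicator hB)
      ⟨B, hBc, fun x hx => Set.indicator_of_notMem hx _⟩
    have h1 : ∀ ω, ∫⁻ x, B.indicator (fun _ => t) x ∂(Φ ω) = t * X ω :=
      fun ω => lintegral_indicator_const hB t
    have h2 : (fun x => 1 - expNeg (B.indicator (fun _ => t) x))
        = B.indicator fun _ => 1 - expNeg t := by
      funext x; by_cases hx : x ∈ B
      · rw [Set.indicator_of_mem hx, Set.indicator_of_mem hx]
      · simp [Set.indicator_of_notMem hx, expNeg_zero]
    simp_rw [h1, h2] at h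
    rw [h]
    refine tsum_congr fun n => ?_
    rw [dppTerm_indicator K r (1 - expNeg t) n, hcndef]
    ring
  -- void probability
  have hs0 : MeasurableSet {ω | X ω = 0} := hX (measurableSet_singleton 0)
  set P0 : ℝ := (μ {ω | X ω = 0}).toReal with hP0def
  have hvoid : ((P0 : ℝ) : ℂ) = ∑' n, cn n := by
    have h := laplace_t ⊤
    have h1 : (fun ω => expNeg (⊤ * X ω)) = {ω | X ω = 0}.indicator fun _ => (1:ℝ) := by
      funext ω
      by_cases hω : X ω = 0
      · have hmem : ω ∈ {ω | X ω = 0} := hω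
        rw [Set.indicator_of_mem hmem, hω, mul_zero, expNeg_zero]
      · have hmem : ω ∉ {ω | X ω = 0} := hω
        rw [Set.indicator_of_notMem hmem, ENNReal.top_mul hω, expNeg_top]
    rw [h1] at h
    rw [integral_indicator_const (1:ℝ) hs0] at h
    simp only [expNeg_top, sub_zero, Complex.ofReal_one, one_pow, mul_one, smul_eq_mul,
      mul_one] at h
    exact h
  -- summability
  obtain ⟨M, hM0, hMb⟩ : ∃ M : ℝ, 0 ≤ M ∧ ∀ x ∈ B, ‖K x x‖ ≤ M := by
    have hc : ContinuousOn (fun x : E2 => ‖K x x‖) B :=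
      ((hK.continuous.comp (continuous_id.prodMk continuous_id)).norm).continuousOn
    obtain ⟨C, hC⟩ := hBc.exists_bound_of_continuousOn hc
    exact ⟨max C 0, le_max_right _ _, fun x hx =>
      le_trans (le_trans (le_abs_self _) (by simpa using hC x hx)) (le_max_left _ _)⟩
  set V : ℝ := (volume B).toReal with hVdef
  have hV0 : 0 ≤ V := ENNReal.toReal_nonneg
  have hball_bound : ∀ n, ‖ballDetInt K r n‖ ≤ (M * V) ^ n := by
    intro n
    unfold ballDetInt
    have hmeas : MeasurableSet (Set.univ.pi fun _ : Fin n => B) :=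
      MeasurableSet.univ_pi fun _ => hB
    have hvol : volume (Set.univ.pi fun _ : Fin n => B) = (volume B) ^ n := by
      rw [volume_pi_pi]; simp
    have hfin : volume (Set.univ.pi fun _ : Fin n => B) < ∞ := by
      rw [hvol]
      exact ENNReal.pow_lt_top (measure_closedBall_lt_top)
    have hbd := norm_setIntegral_le_of_norm_le_const hfin
      (f := fun x : Fin n → E2 => (Matrix.of fun i j : Fin n => K (x i) (x j)).det)
      (C := M ^ n)
      (fun x hx => det_bound K M x (hK.posSemidef n x)
        (fun i => hMb (x i) (hx i (Set.mem_univ i))))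
    refine hbd.trans ?_
    rw [measureReal_def, hvol, ENNReal.toReal_pow, mul_pow]
  have hcn_bound : ∀ n, ‖cn n‖ ≤ (M * V) ^ n / n.factorial := by
    intro n
    rw [hcndef]
    simp only [norm_mul, norm_div, norm_pow, norm_neg, norm_one, one_pow, one_div]
    rw [Complex.norm_natCast]
    calc (n.factorial : ℝ)⁻¹ * ‖ballDetInt K r n‖
        ≤ (n.factorial : ℝ)⁻¹ * (M * V) ^ n := by
          refine mul_le_mul_of_nonneg_left (hball_bound n) (by positivity)
      _ = (M * V) ^ n / n.factorial := by ring
  have hsumc : Summable cn := by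
    refine Summable.of_norm (Summable.of_nonneg_of_le (fun n => norm_nonneg _) hcn_bound ?_)
    exact Real.summable_pow_div_factorial (M * V)
  have hsumnc : Summable fun n : ℕ => (n : ℝ) * ‖cn n‖ := by
    refine Summable.of_nonneg_of_le (fun n => by positivity)
      (fun n => mul_le_mul_of_nonneg_left (hcn_bound n) (Nat.cast_nonneg n)) ?_
    have : Summable fun n : ℕ => ((n+1 : ℕ) : ℝ) * ((M*V) ^ (n+1) / (n+1).factorial) := by
      have heq : (fun n : ℕ => ((n+1 : ℕ) : ℝ) * ((M*V) ^ (n+1) / (n+1).factorial))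
          = fun n : ℕ => (M*V) * ((M*V) ^ n / n.factorial) := by
        funext n
        rw [Nat.factorial_succ]
        push_cast
        field_simp
        ring
      rw [heq]
      exact (Real.summable_pow_div_factorial (M * V)).mul_left _
    exact (summable_nat_add_iff 1).mp this
  set Cs : ℝ := ∑' n : ℕ, (n : ℝ) * ‖cn n‖ with hCsdef
  -- the exponential moment bound
  set Xr : Ω → ℝ := fun ω => (X ω).toReal with hXrdef
  have hXr : Measurable Xr := hX.ennreal_toReal
  have hXr0 : ∀ ω, 0 ≤ Xr ω := fun ω => ENNReal.toReal_nonneg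
  have hint : ∀ t₀ : ℝ, 0 ≤ t₀ → Integrable (fun ω => Real.exp (-(t₀ * Xr ω))) μ := by
    intro t₀ ht₀
    refine (integrable_const (1:ℝ)).mono' ?_ ?_
    · exact ((hXr.const_mul t₀).neg.exp).aestronglyMeasurable
    · refine ae_of_all _ fun ω => ?_
      rw [Real.norm_eq_abs, abs_of_nonneg (Real.exp_pos _).le]
      refine Real.exp_le_one_iff.mpr (neg_nonpos.mpr ?_)
      positivity
  -- key difference bound
  have hCs0 : 0 ≤ Cs := tsum_nonneg fun n => by positivity
  have hdiff : ∀ t₀ : ℝ, 0 ≤ t₀ →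
      |(∫ ω, Real.exp (-(t₀ * Xr ω)) ∂μ) - P0| ≤ Cs * Real.exp (-t₀) := by
    intro t₀ ht₀
    set sv : ℝ := 1 - Real.exp (-t₀) with hsdef
    have hexp1 : Real.exp (-t₀) ≤ 1 := Real.exp_le_one_iff.mpr (neg_nonpos.mpr ht₀)
    have hs0 : 0 ≤ sv := by rw [hsdef]; linarith
    have hs1 : sv ≤ 1 := by rw [hsdef]; have := (Real.exp_pos (-t₀)).le; linarith
    have hLt : ((∫ ω, Real.exp (-(t₀ * Xr ω)) ∂μ : ℝ) : ℂ) = ∑' n : ℕ, cn n * (sv:ℂ)^n := by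
      have h := laplace_t (ENNReal.ofReal t₀)
      have h1 : (fun ω => expNeg (ENNReal.ofReal t₀ * X ω))
          = fun ω => Real.exp (-(t₀ * Xr ω)) := by
        funext ω
        have hne : ENNReal.ofReal t₀ * X ω ≠ ∞ :=
          ENNReal.mul_ne_top ENNReal.ofReal_ne_top (hXfin ω)
        rw [expNeg, if_neg hne, ENNReal.toReal_mul, ENNReal.toReal_ofReal ht₀]
      have h2 : (1 - expNeg (ENNReal.ofReal t₀) : ℝ) = sv := by
        rw [expNeg, if_neg ENNReal.ofReal_ne_top, ENNReal.toReal_ofReal ht₀, hsdef]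
      rw [h1] at h
      rw [h2] at h
      exact h
    have habs : ∀ n : ℕ, ‖(sv:ℂ)^n - 1‖ ≤ (n:ℝ) * Real.exp (-t₀) := by
      intro n
      have hpow1 : sv ^ n ≤ 1 := pow_le_one₀ hs0 hs1
      have hbern : 1 + (n:ℝ) * (sv - 1) ≤ sv ^ n := by
        have h := one_add_mul_le_pow (by linarith : (-2:ℝ) ≤ sv - 1) n
        rwa [show (1:ℝ) + (sv - 1) = sv by ring] at h
      have hcast : (sv:ℂ)^n - 1 = ((sv^n - 1 : ℝ) : ℂ) := by push_cast; ring
      rw [hcast, Complex.norm_real, Real.norm_eq_abs, abs_of_nonpos (by linarith)]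
      have : Real.exp (-t₀) = 1 - sv := by rw [hsdef]; ring
      rw [this]
      nlinarith
    have hsum1 : Summable fun n : ℕ => cn n * (sv:ℂ)^n := by
      refine Summable.of_norm (Summable.of_nonneg_of_le (fun n => norm_nonneg _)
        (fun n => ?_) (hsumc.norm))
      rw [norm_mul]
      calc ‖cn n‖ * ‖(sv:ℂ)^n‖ ≤ ‖cn n‖ * 1 := by
            refine mul_le_mul_of_nonneg_left ?_ (norm_nonneg _)
            rw [norm_pow, Complex.norm_real, Real.norm_eq_abs, abs_of_nonneg hs0]
            exact pow_le_one₀ hs0 hs1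
        _ = ‖cn n‖ := mul_one _
    have hdiffc : ((∫ ω, Real.exp (-(t₀ * Xr ω)) ∂μ : ℝ) : ℂ) - ((P0:ℝ):ℂ)
        = ∑' n : ℕ, cn n * ((sv:ℂ)^n - 1) := by
      rw [hLt, hvoid, ← Summable.tsum_sub hsum1 hsumc]
      exact tsum_congr fun n => by ring
    have hnormsum : Summable fun n : ℕ => ‖cn n * ((sv:ℂ)^n - 1)‖ := by
      refine Summable.of_nonneg_of_le (fun n => norm_nonneg _) (fun n => ?_)
        (hsumnc.mul_right (Real.exp (-t₀)))
      rw [norm_mul]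
      calc ‖cn n‖ * ‖(sv:ℂ)^n - 1‖ ≤ ‖cn n‖ * ((n:ℝ) * Real.exp (-t₀)) :=
            mul_le_mul_of_nonneg_left (habs n) (norm_nonneg _)
        _ = (n:ℝ) * ‖cn n‖ * Real.exp (-t₀) := by ring
    have : |(∫ ω, Real.exp (-(t₀ * Xr ω)) ∂μ) - P0|
        = ‖((∫ ω, Real.exp (-(t₀ * Xr ω)) ∂μ : ℝ) : ℂ) - ((P0:ℝ):ℂ)‖ := by
      rw [← Complex.ofReal_sub, Complex.norm_real, Real.norm_eq_abs]
    rw [this, hdiffc]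
    calc ‖∑' n : ℕ, cn n * ((sv:ℂ)^n - 1)‖ ≤ ∑' n : ℕ, ‖cn n * ((sv:ℂ)^n - 1)‖ :=
          norm_tsum_le_tsum_norm hnormsum
      _ ≤ ∑' n : ℕ, (n:ℝ) * ‖cn n‖ * Real.exp (-t₀) := by
          refine Summable.tsum_le_tsum (fun n => ?_) hnormsum
            (hsumnc.mul_right (Real.exp (-t₀)))
          rw [norm_mul]
          calc ‖cn n‖ * ‖(sv:ℂ)^n - 1‖ ≤ ‖cn n‖ * ((n:ℝ) * Real.exp (-t₀)) :=
                mul_le_mul_of_nonneg_left (habs n) (norm_nonneg _)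
            _ = (n:ℝ) * ‖cn n‖ * Real.exp (-t₀) := by ring
      _ = Cs * Real.exp (-t₀) := by rw [tsum_mul_right]
  -- intermediate values have measure zero
  have hSa : ∀ a : ℝ, 0 < a → a < 1 → μ {ω | 0 < X ω ∧ X ω < ENNReal.ofReal a} = 0 := by
    intro a ha0 ha1
    set Sa := {ω | 0 < X ω ∧ X ω < ENNReal.ofReal a} with hSadef
    have hSameas : MeasurableSet Sa := by
      have : Sa = {ω | 0 < X ω} ∩ {ω | X ω < ENNReal.ofReal a} := rfl
      rw [this]
      exact (measurableSet_lt measurable_const hX).inter (measurableSet_lt hX measurable_const)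
    have hkey : ∀ t₀ : ℝ, 0 ≤ t₀ →
        (μ Sa).toReal ≤ Cs * Real.exp (-((1-a) * t₀)) := by
      intro t₀ ht₀
      have hIone : ∫ ω in {ω | X ω = 0}, Real.exp (-(t₀ * Xr ω)) ∂μ = P0 := by
        have heq : Set.EqOn (fun ω => Real.exp (-(t₀ * Xr ω))) (fun _ => (1:ℝ))
            {ω | X ω = 0} := by
          intro ω hω
          have : Xr ω = 0 := by rw [hXrdef]; simp only; rw [hω]; simp
          simp [this]
        rw [setIntegral_congr_fun hs0 heq, setIntegral_const, smul_eq_mul, mul_one, hP0def, measureReal_def]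
      have hIcompl : ∫ ω in {ω | X ω = 0}ᶜ, Real.exp (-(t₀ * Xr ω)) ∂μ
          = (∫ ω, Real.exp (-(t₀ * Xr ω)) ∂μ) - P0 := by
        have := integral_add_compl hs0 (hint t₀ ht₀)
        rw [← this, hIone]; ring
      have hlow : Real.exp (-(t₀ * a)) * (μ Sa).toReal
          ≤ ∫ ω in Sa, Real.exp (-(t₀ * Xr ω)) ∂μ := by
        refine setIntegral_ge_of_const_le_real hSameas (measure_ne_top _ _) (fun ω hω => ?_)
          ((hint t₀ ht₀).integrableOn)
        have hXa : Xr ω ≤ a := by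
          rw [hXrdef]
          exact ENNReal.toReal_le_of_le_ofReal ha0.le hω.2.le
        exact Real.exp_le_exp.mpr (by nlinarith)
      have hmono : ∫ ω in Sa, Real.exp (-(t₀ * Xr ω)) ∂μ
          ≤ ∫ ω in {ω | X ω = 0}ᶜ, Real.exp (-(t₀ * Xr ω)) ∂μ := by
        refine setIntegral_mono_set ((hint t₀ ht₀).integrableOn)
          (ae_of_all _ fun ω => (Real.exp_pos _).le) (HasSubset.Subset.eventuallyLE ?_)
        intro ω hω
        exact fun h0 => absurd (h0 : X ω = 0) hω.1.ne'
      have hup : (∫ ω, Real.exp (-(t₀ * Xr ω)) ∂μ) - P0 ≤ Cs * Real.exp (-t₀) :=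
        le_trans (le_abs_self _) (hdiff t₀ ht₀)
      have hchain : Real.exp (-(t₀ * a)) * (μ Sa).toReal ≤ Cs * Real.exp (-t₀) := by
        calc Real.exp (-(t₀ * a)) * (μ Sa).toReal
            ≤ ∫ ω in Sa, Real.exp (-(t₀ * Xr ω)) ∂μ := hlow
          _ ≤ ∫ ω in {ω | X ω = 0}ᶜ, Real.exp (-(t₀ * Xr ω)) ∂μ := hmono
          _ = (∫ ω, Real.exp (-(t₀ * Xr ω)) ∂μ) - P0 := hIcompl
          _ ≤ Cs * Real.exp (-t₀) := hup
      have hpos : (0:ℝ) < Real.exp (-(t₀ * a)) := Real.exp_pos _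
      have h1 : (μ Sa).toReal ≤ Cs * Real.exp (-t₀) / Real.exp (-(t₀ * a)) := by
        rw [le_div_iff₀ hpos]
        calc (μ Sa).toReal * Real.exp (-(t₀ * a))
            = Real.exp (-(t₀ * a)) * (μ Sa).toReal := by ring
          _ ≤ Cs * Real.exp (-t₀) := hchain
      refine h1.trans (le_of_eq ?_)
      rw [mul_div_assoc, ← Real.exp_sub]
      congr 1
      ring
    have hlim : Tendsto (fun T : ℝ => Cs * Real.exp (-((1-a) * T))) atTop (𝓝 0) := by
      have h1 : Tendsto (fun T : ℝ => (1-a) * T) atTop atTop :=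
        Tendsto.const_mul_atTop (by linarith) tendsto_id
      have h2 : Tendsto (fun T : ℝ => -((1-a) * T)) atTop atBot :=
        tendsto_neg_atTop_atBot.comp h1
      have h3 : Tendsto (fun T : ℝ => Real.exp (-((1-a) * T))) atTop (𝓝 0) :=
        Real.tendsto_exp_atBot.comp h2
      have := h3.const_mul Cs
      simpa using this
    have hle0 : (μ Sa).toReal ≤ 0 :=
      ge_of_tendsto hlim (eventually_atTop.mpr ⟨0, fun T hT => hkey T hT⟩)
    have : (μ Sa).toReal = 0 := le_antisymm hle0 ENNReal.toReal_nonneg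
    rcases (ENNReal.toReal_eq_zero_iff _).mp this with h | h
    · exact h
    · exact absurd h (measure_ne_top _ _)
  have hmid : μ {ω | 0 < X ω ∧ X ω < 1} = 0 := by
    have hsub : {ω | 0 < X ω ∧ X ω < 1}
        ⊆ ⋃ k : ℕ, {ω | 0 < X ω ∧ X ω < ENNReal.ofReal (1 - 1/(k+2))} := by
      intro ω hω
      have hlt : (X ω).toReal < 1 := by
        have := hω.2
        rw [← ENNReal.toReal_one]
        exact (ENNReal.toReal_lt_toReal (hXfin ω) ENNReal.one_ne_top).mpr this
      have h2 : 0 < 1 - (X ω).toReal := by linarith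
      obtain ⟨k, hk⟩ := exists_nat_gt (1/(1 - (X ω).toReal))
      refine Set.mem_iUnion.mpr ⟨k, hω.1, ?_⟩
      rw [ENNReal.lt_ofReal_iff_toReal_lt (hXfin ω)]
      have h3 : 1/((k:ℝ)+2) < 1 - (X ω).toReal := by
        rw [div_lt_iff₀ (by positivity)]
        have h4 : 1/(1 - (X ω).toReal) < (k:ℝ)+2 := by linarith
        have h5 := (div_lt_iff₀ h2).mp h4
        nlinarith
      linarith
    refine measure_mono_null hsub (measure_iUnion_null fun k => hSa _ ?_ ?_)
    · have : 1/((k:ℝ)+2) < 1 := by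
        rw [div_lt_one (by positivity)]
        have : (0:ℝ) ≤ (k:ℝ) := Nat.cast_nonneg k
        linarith
      linarith
    · have : 0 < 1/((k:ℝ)+2) := by positivity
      linarith
  -- relating {1 ≤ X} to the complement of {X = 0}
  have hone : μ {ω | 1 ≤ X ω} = μ ({ω | X ω = 0}ᶜ) := by
    apply le_antisymm
    · refine measure_mono fun ω h => ?_
      intro h0
      rw [Set.mem_setOf_eq] at h
      rw [(h0 : X ω = 0)] at h
      exact absurd h (by simp)
    · calc μ ({ω | X ω = 0}ᶜ)
          ≤ μ ({ω | 1 ≤ X ω} ∪ {ω | 0 < X ω ∧ X ω < 1}) := by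
            refine measure_mono fun ω h => ?_
            have hne : X ω ≠ 0 := h
            rcases lt_or_ge (X ω) 1 with hlt | hge
            · exact Or.inr ⟨pos_iff_ne_zero.mpr hne, hlt⟩
            · exact Or.inl hge
        _ ≤ μ {ω | 1 ≤ X ω} + μ {ω | 0 < X ω ∧ X ω < 1} := measure_union_le _ _
        _ = μ {ω | 1 ≤ X ω} := by rw [hmid, add_zero]
  have hcompl : (μ ({ω | X ω = 0}ᶜ)).toReal = 1 - P0 := by
    rw [measure_compl hs0 (measure_ne_top _ _), measure_univ,
      ENNReal.toReal_sub_of_le prob_le_one ENNReal.one_ne_top, ENNReal.toReal_one, hP0def]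
  have hcn0 : cn 0 = 1 := by
    rw [hcndef]; simp [ballDetInt_zero]
  have hshift : ∑' n : ℕ, cn (n+1) = (∑' n : ℕ, cn n) - 1 := by
    have := Summable.tsum_eq_zero_add hsumc
    rw [hcn0] at this
    rw [this]; ring
  constructor
  · calc ((μ {ω | 1 ≤ X ω}).toReal : ℂ)
        = ((1 - P0 : ℝ) : ℂ) := by rw [hone, hcompl]
      _ = 1 - ((P0:ℝ):ℂ) := by push_cast; ring
      _ = 1 - ∑' n : ℕ, cn n := by rw [hvoid]
      _ = - ∑' n : ℕ, cn (n+1) := by rw [hshift]; ring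
      _ = ∑' n : ℕ, -(cn (n+1)) := by rw [tsum_neg]
      _ = ∑' n : ℕ, ((-1 : ℂ) ^ n / (n + 1).factorial) * ballDetInt K r (n + 1) := by
          refine tsum_congr fun n => ?_
          rw [hcndef]
          simp only [pow_succ]
          ring
  · rw [hvoid]
end
end

section
/- Fix λ > 0, α > 0, β > 2, P > 0, r₀ ≥ 0, and set x₀ = (r₀,0) ∈ ℝ². Then P ∫_{ℝ²} λ(1 − exp(−2‖x−x₀‖²/α²)) · min(1, ‖x‖^{−β}) dx = Pπλβ/(β−2) − 2Pπλ exp(−2r₀²/α²) (A₁(r₀) + A₂(r₀)), where A₁(r₀) = ∫_0^1 exp(−2r²/α²) I₀(4rr₀/α²) r dr, A₂(r₀) = ∫_1^∞ exp(−2r²/α²) r^{1−β} I₀(4rr₀/α²) dr, and I₀(z) = (1/2π)∫_0^{2π} exp(z cos θ) dθ is the modified Bessel function of the first kind of order 0. (This is the mean interference at the origin for the Gauss determinantal point process with parameters (λ,α), conditioned on a serving base station at x₀, with path loss l(x) = min(1,‖x‖^{−β}), since the reduced Palm kernel of the Gauss kernel K(x,y) = λexp(−‖x−y‖²/α²) has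 diagonal K^!_{x₀}(x,x) = λ(1 − exp(−2‖x−x₀‖²/α²)).) -/
open MeasureTheory Metric intervalIntegral
open scoped Real Topology BigOperators

noncomputable section

/-- The point `(a, b)` of `ℝ²`. -/
def pt (a b : ℝ) : E2 := (EuclideanSpace.equiv (Fin 2) ℝ).symm ![a, b]

/-- The modified Bessel function of the first kind of order 0:
`I₀(z) = (1/2π) ∫_0^{2π} exp(z cos θ) dθ`. -/
def besselI0 (z : ℝ) : ℝ :=
  (1 / (2 * Real.pi)) * ∫ θ in (0 : ℝ)..(2 * Real.pi), Real.exp (z * Real.cos θ)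

namespace Stmt8Aux

open Set

lemma expcos_periodic (z : ℝ) :
    Function.Periodic (fun θ => Real.exp (z * Real.cos θ)) (2 * Real.pi) := by
  intro x; simp [Real.cos_add_two_pi]

lemma integral_expcos (z : ℝ) :
    (∫ θ in (-Real.pi)..Real.pi, Real.exp (z * Real.cos θ)) = 2 * Real.pi * besselI0 z := by
  have h := (expcos_periodic z).intervalIntegral_add_eq (-Real.pi) 0
  rw [besselI0]
  have hps : -Real.pi + 2 * Real.pi = Real.pi := by ring
  rw [hps] at h
  rw [h]
  rw [zero_add]
  field_simp

lemma besselI0_nonneg (z : ℝ) : 0 ≤ besselI0 z := by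
  apply mul_nonneg (by positivity)
  apply intervalIntegral.integral_nonneg (by positivity)
  intro x _; positivity

lemma besselI0_le (z : ℝ) (hz : 0 ≤ z) : besselI0 z ≤ Real.exp z := by
  have h : (∫ θ in (0:ℝ)..(2*Real.pi), Real.exp (z * Real.cos θ)) ≤ 2 * Real.pi * Real.exp z := by
    calc (∫ θ in (0:ℝ)..(2*Real.pi), Real.exp (z * Real.cos θ))
        ≤ ∫ _ in (0:ℝ)..(2*Real.pi), Real.exp z := by
          apply intervalIntegral.integral_mono_on (by positivity)
          · exact (Real.continuous_exp.comp (by continuity)).intervalIntegrable _ _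
          · exact intervalIntegrable_const
          · intro x _
            exact Real.exp_le_exp.2 (by nlinarith [Real.cos_le_one x, Real.neg_one_le_cos x])
      _ = 2 * Real.pi * Real.exp z := by simp [mul_comm]
  rw [besselI0]
  have hπ : (0:ℝ) < 2 * Real.pi := by positivity
  calc (1 / (2*Real.pi)) * ∫ θ in (0:ℝ)..(2*Real.pi), Real.exp (z * Real.cos θ)
      ≤ (1 / (2*Real.pi)) * (2 * Real.pi * Real.exp z) :=
        mul_le_mul_of_nonneg_left h (by positivity)
    _ = Real.exp z := by field_simp

lemma besselI0_continuous : Continuous besselI0 := by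
  apply Continuous.mul continuous_const
  apply intervalIntegral.continuous_parametric_intervalIntegral_of_continuous' (by fun_prop) _ _

lemma min_eq_one {β r : ℝ} (hβ : 0 < β) (hr : r ∈ Ioc (0:ℝ) 1) : min 1 (r ^ (-β)) = 1 := by
  have : (1:ℝ) ≤ r ^ (-β) := by
    rw [Real.rpow_neg hr.1.le]
    rw [le_inv_comm₀ one_pos (Real.rpow_pos_of_pos hr.1 β)]
    simpa using Real.rpow_le_one hr.1.le hr.2 hβ.le
  simp [min_eq_left this]

lemma min_eq_rpow {β r : ℝ} (hβ : 0 < β) (hr : r ∈ Ioi (1:ℝ)) : min 1 (r ^ (-β)) = r ^ (-β) := by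
  have : r ^ (-β) ≤ 1 := Real.rpow_le_one_of_one_le_of_nonpos (le_of_lt hr) (by linarith)
  simp [min_eq_right this]

lemma rmul_rpow {β r : ℝ} (hr : (0:ℝ) < r) : r * r ^ (-β) = r ^ (1 - β) := by
  rw [show (1:ℝ) - β = 1 + -β by ring, Real.rpow_add hr, Real.rpow_one]

lemma phi0_integrableOn_Ioc {β : ℝ} (hβ : 2 < β) :
    IntegrableOn (fun r : ℝ => r * min 1 (r ^ (-β))) (Ioc 0 1) := by
  apply (integrableOn_Ioc_iff_integrableOn_Ioo).2
  apply Integrable.mono' (g := fun _ => (1:ℝ)) (integrableOn_const measure_Ioo_lt_top.ne)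
  · have : Measurable fun r : ℝ => r * min 1 (r ^ (-β)) := by measurability
    exact this.aestronglyMeasurable
  · filter_upwards [ae_restrict_mem measurableSet_Ioo] with r hr
    have h1 : min 1 (r ^ (-β)) = 1 := min_eq_one (by linarith) ⟨hr.1, hr.2.le⟩
    rw [h1]
    simp only [mul_one]
    rw [Real.norm_eq_abs, abs_of_nonneg hr.1.le]
    exact hr.2.le

lemma phi0_integral_Ioc {β : ℝ} (hβ : 2 < β) :
    ∫ r in Ioc (0:ℝ) 1, r * min 1 (r ^ (-β)) = 1/2 := by
  rw [setIntegral_congr_fun measurableSet_Ioc (g := fun r => r)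
    (fun r hr => by rw [min_eq_one (by linarith) hr, mul_one])]
  rw [← intervalIntegral.integral_of_le zero_le_one]
  simp

lemma phi0_integrableOn_Ioi {β : ℝ} (hβ : 2 < β) :
    IntegrableOn (fun r : ℝ => r * min 1 (r ^ (-β))) (Ioi 1) := by
  have h : IntegrableOn (fun r : ℝ => r ^ (1 - β)) (Ioi 1) :=
    integrableOn_Ioi_rpow_of_lt (by linarith) one_pos
  apply h.congr_fun (fun r hr => ?_) measurableSet_Ioi
  rw [min_eq_rpow (by linarith) hr, rmul_rpow (lt_trans one_pos hr)]

lemma phi0_integral_Ioi {β : ℝ} (hβ : 2 < β) :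
    ∫ r in Ioi (1:ℝ), r * min 1 (r ^ (-β)) = 1/(β-2) := by
  rw [setIntegral_congr_fun measurableSet_Ioi (g := fun r => r ^ (1-β))
    (fun r hr => by rw [min_eq_rpow (by linarith) hr, rmul_rpow (lt_trans one_pos hr)])]
  rw [integral_Ioi_rpow_of_lt (by linarith) one_pos]
  rw [Real.one_rpow]
  rw [div_eq_div_iff (by linarith) (by linarith)]
  ring

lemma phi0_integrableOn {β : ℝ} (hβ : 2 < β) :
    IntegrableOn (fun r : ℝ => r * min 1 (r ^ (-β))) (Ioi 0) := by
  have := (phi0_integrableOn_Ioc hβ).union (phi0_integrableOn_Ioi hβ)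
  rwa [Ioc_union_Ioi_eq_Ioi zero_le_one] at this

lemma phi0_integral {β : ℝ} (hβ : 2 < β) :
    ∫ r in Ioi (0:ℝ), r * min 1 (r ^ (-β)) = 1/2 + 1/(β-2) := by
  rw [← Ioc_union_Ioi_eq_Ioi (zero_le_one (α := ℝ)),
    setIntegral_union Ioc_disjoint_Ioi_same measurableSet_Ioi
      (phi0_integrableOn_Ioc hβ) (phi0_integrableOn_Ioi hβ),
    phi0_integral_Ioc hβ, phi0_integral_Ioi hβ]

def T2 : E2 ≃ᵐ ℝ × ℝ :=
  (MeasurableEquiv.toLp 2 (Fin 2 → ℝ)).symm.trans (MeasurableEquiv.finTwoArrow)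

lemma norm_E2 (x : E2) : ‖x‖ = Real.sqrt (x 0 ^ 2 + x 1 ^ 2) := by
  rw [EuclideanSpace.norm_eq]; simp [Fin.sum_univ_two, sq_abs]

lemma stepA (f : E2 → ℝ) : (∫ x : E2, f x) = ∫ p : ℝ × ℝ, f (T2.symm p) := by
  have hT : MeasurePreserving (T2.symm) volume volume :=
    ((volume_preserving_finTwoArrow ℝ).comp
      (EuclideanSpace.volume_preserving_symm_measurableEquiv_toLp (Fin 2))).symm
  exact (hT.integral_comp T2.symm.measurableEmbedding f).symm

lemma step1 (lam α β P r₀ : ℝ) :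
    (∫ x : E2, P * (lam * (1 - Real.exp (-(2 * ‖x - pt r₀ 0‖ ^ 2 / α ^ 2)))) * min 1 (‖x‖ ^ (-β)))
    = ∫ p : ℝ × ℝ, P * (lam * (1 - Real.exp (-(2 * ((p.1 - r₀)^2 + p.2^2) / α ^ 2)))) *
        min 1 (Real.sqrt (p.1^2 + p.2^2) ^ (-β)) := by
  rw [stepA]
  congr 1; ext p
  have hc1 : (T2.symm p - pt r₀ 0) 0 = p.1 - r₀ := by
    rw [PiLp.sub_apply]; rfl
  have hc2 : (T2.symm p - pt r₀ 0) 1 = p.2 := by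
    rw [PiLp.sub_apply, show (T2.symm p) 1 = p.2 from rfl, show pt r₀ 0 1 = 0 from rfl, sub_zero]
  rw [norm_E2, norm_E2, hc1, hc2,
    show (T2.symm p) 0 = p.1 from rfl, show (T2.symm p) 1 = p.2 from rfl]
  rw [Real.sq_sqrt (by positivity)]

lemma step2 (lam α β P r₀ : ℝ) :
    (∫ p : ℝ × ℝ, P * (lam * (1 - Real.exp (-(2 * ((p.1 - r₀)^2 + p.2^2) / α ^ 2)))) *
        min 1 (Real.sqrt (p.1^2 + p.2^2) ^ (-β)))
    = ∫ q in Set.Ioi (0:ℝ) ×ˢ Set.Ioo (-Real.pi) Real.pi,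
        q.1 * (P * (lam * (1 - Real.exp (-(2 * (q.1^2 - 2*q.1*r₀*Real.cos q.2 + r₀^2) / α ^ 2)))) *
          min 1 (q.1 ^ (-β))) := by
  rw [← integral_comp_polarCoord_symm]
  rw [show polarCoord.target = Set.Ioi (0:ℝ) ×ˢ Set.Ioo (-Real.pi) Real.pi from rfl]
  apply setIntegral_congr_fun (measurableSet_Ioi.prod measurableSet_Ioo)
  intro q hq
  obtain ⟨hq1, _⟩ := hq
  have hr : (0:ℝ) < q.1 := hq1
  simp only [polarCoord_symm_apply, smul_eq_mul]
  have h1 : (q.1 * Real.cos q.2)^2 + (q.1 * Real.sin q.2)^2 = q.1^2 := by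
    have := Real.sin_sq_add_cos_sq q.2; nlinarith
  have h2 : (q.1 * Real.cos q.2 - r₀)^2 + (q.1 * Real.sin q.2)^2
      = q.1^2 - 2*q.1*r₀*Real.cos q.2 + r₀^2 := by
    have := Real.sin_sq_add_cos_sq q.2; nlinarith
  rw [h1, h2, Real.sqrt_sq hr.le]

end Stmt8Aux

open Stmt8Aux Set in
set_option maxHeartbeats 2000000 in
/-- Mean interference for the Gauss DPP with a fixed serving base
station at `x₀ = (r₀, 0)` and path loss `l(x) = min(1, ‖x‖^{-β})`:
`P ∫ λ(1 − e^{−2‖x−x₀‖²/α²}) min(1,‖x‖^{−β}) dx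
  = Pπλβ/(β−2) − 2Pπλ e^{−2r₀²/α²}(A₁(r₀)+A₂(r₀))`. -/
theorem stmt_8 (lam α β P r₀ : ℝ)
    (hlam : 0 < lam) (hα : 0 < α) (hβ : 2 < β) (hP : 0 < P) (hr₀ : 0 ≤ r₀) :
    (∫ x : E2,
        P * (lam * (1 - Real.exp (-(2 * ‖x - pt r₀ 0‖ ^ 2 / α ^ 2)))) *
          min 1 (‖x‖ ^ (-β))) =
      P * Real.pi * lam * β / (β - 2) -
        2 * P * Real.pi * lam * Real.exp (-(2 * r₀ ^ 2 / α ^ 2)) *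
          ((∫ r in (0 : ℝ)..1,
              Real.exp (-(2 * r ^ 2 / α ^ 2)) * besselI0 (4 * r * r₀ / α ^ 2) * r) +
            ∫ r in Set.Ioi (1 : ℝ),
              Real.exp (-(2 * r ^ 2 / α ^ 2)) * r ^ (1 - β) *
                besselI0 (4 * r * r₀ / α ^ 2)) := by
  have hα2 : (0:ℝ) < α ^ 2 := by positivity
  have hπ : (0:ℝ) < Real.pi := Real.pi_pos
  set G : ℝ × ℝ → ℝ := fun q =>
    q.1 * (P * (lam * (1 - Real.exp (-(2 * (q.1^2 - 2*q.1*r₀*Real.cos q.2 + r₀^2) / α ^ 2)))) *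
      min 1 (q.1 ^ (-β))) with hG
  -- measurability of G
  have hGmeas : Measurable G := by
    apply Measurable.mul measurable_fst
    apply Measurable.mul
    · apply Measurable.const_mul
      apply Measurable.const_mul
      apply Measurable.const_sub
      apply Real.measurable_exp.comp
      measurability
    · apply Measurable.min measurable_const
      measurability
  -- the integrable bound
  have hbound : Integrable (fun q : ℝ × ℝ => (P * lam) * (q.1 * min 1 (q.1 ^ (-β))))
      ((volume.restrict (Ioi (0:ℝ))).prod (volume.restrict (Ioo (-Real.pi) Real.pi))) := by
    have h1 : Integrable (fun r : ℝ => (P * lam) * (r * min 1 (r ^ (-β))))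
        (volume.restrict (Ioi (0:ℝ))) := (phi0_integrableOn hβ).const_mul _
    have h2 : Integrable (fun _ : ℝ => (1:ℝ)) (volume.restrict (Ioo (-Real.pi) Real.pi)) :=
      integrableOn_const measure_Ioo_lt_top.ne
    simpa using h1.mul_prod h2
  have hGint : Integrable G
      ((volume.restrict (Ioi (0:ℝ))).prod (volume.restrict (Ioo (-Real.pi) Real.pi))) := by
    apply Integrable.mono' hbound hGmeas.aestronglyMeasurable
    rw [Measure.prod_restrict]
    filter_upwards [ae_restrict_mem (measurableSet_Ioi.prod measurableSet_Ioo)] with q hq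
    have hq1 : (0:ℝ) < q.1 := hq.1
    have hmn : 0 ≤ min 1 (q.1 ^ (-β)) := le_min zero_le_one (Real.rpow_nonneg hq1.le _)
    have hml : min 1 (q.1 ^ (-β)) ≤ 1 := min_le_left _ _
    have hexple : Real.exp (-(2 * (q.1^2 - 2*q.1*r₀*Real.cos q.2 + r₀^2) / α ^ 2)) ≤ 1 := by
      rw [Real.exp_le_one_iff]
      have hnum : 0 ≤ q.1^2 - 2*q.1*r₀*Real.cos q.2 + r₀^2 := by
        nlinarith [Real.cos_le_one q.2, Real.neg_one_le_cos q.2, sq_nonneg (q.1 - r₀),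
          sq_nonneg (q.1 + r₀), mul_nonneg hq1.le hr₀]
      have : 0 ≤ 2 * (q.1^2 - 2*q.1*r₀*Real.cos q.2 + r₀^2) / α ^ 2 := by positivity
      linarith
    have hexppos := Real.exp_pos (-(2 * (q.1^2 - 2*q.1*r₀*Real.cos q.2 + r₀^2) / α ^ 2))
    have hGnn : 0 ≤ G q := by
      apply mul_nonneg hq1.le
      apply mul_nonneg _ hmn
      apply mul_nonneg hP.le
      apply mul_nonneg hlam.le
      linarith
    rw [Real.norm_eq_abs, abs_of_nonneg hGnn, hG]
    have key : q.1 * (P * (lam * (1 - Real.exp (-(2 * (q.1^2 - 2*q.1*r₀*Real.cos q.2 + r₀^2) / α ^ 2)))) *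
        min 1 (q.1 ^ (-β))) ≤ q.1 * (P * (lam * 1) * min 1 (q.1 ^ (-β))) := by
      have k1 : lam * (1 - Real.exp (-(2 * (q.1^2 - 2*q.1*r₀*Real.cos q.2 + r₀^2) / α ^ 2))) ≤ lam * 1 :=
        mul_le_mul_of_nonneg_left (by linarith) hlam.le
      have k2 := mul_le_mul_of_nonneg_left k1 hP.le
      have k3 := mul_le_mul_of_nonneg_right k2 hmn
      exact mul_le_mul_of_nonneg_left k3 hq1.le
    calc q.1 * (P * (lam * (1 - Real.exp (-(2 * (q.1^2 - 2*q.1*r₀*Real.cos q.2 + r₀^2) / α ^ 2)))) *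
          min 1 (q.1 ^ (-β)))
        ≤ q.1 * (P * (lam * 1) * min 1 (q.1 ^ (-β))) := key
      _ = (P * lam) * (q.1 * min 1 (q.1 ^ (-β))) := by ring
  -- inner integral
  have hinner : ∀ r ∈ Ioi (0:ℝ),
      (∫ θ in Ioo (-Real.pi) Real.pi, G (r, θ))
        = (2 * Real.pi * (P * lam)) *
            (r * min 1 (r ^ (-β)) -
              r * min 1 (r ^ (-β)) *
                (Real.exp (-(2 * (r^2 + r₀^2) / α ^ 2)) * besselI0 (4 * r * r₀ / α ^ 2))) := by
    intro r _
    have hsplit : ∀ θ : ℝ,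
        Real.exp (-(2 * (r^2 - 2*r*r₀*Real.cos θ + r₀^2) / α ^ 2))
          = Real.exp (-(2 * (r^2 + r₀^2) / α ^ 2)) * Real.exp ((4 * r * r₀ / α ^ 2) * Real.cos θ) := by
      intro θ
      rw [← Real.exp_add]
      congr 1
      field_simp
      ring
    have hfun : ∀ θ : ℝ, G (r, θ)
        = (r * (P * lam) * min 1 (r ^ (-β)))
          - (r * (P * lam) * min 1 (r ^ (-β)) * Real.exp (-(2 * (r^2 + r₀^2) / α ^ 2))) *
              Real.exp ((4 * r * r₀ / α ^ 2) * Real.cos θ) := by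
      intro θ
      rw [hG]
      simp only
      rw [hsplit θ]
      ring
    rw [setIntegral_congr_fun measurableSet_Ioo (g := fun θ =>
      (r * (P * lam) * min 1 (r ^ (-β)))
        - (r * (P * lam) * min 1 (r ^ (-β)) * Real.exp (-(2 * (r^2 + r₀^2) / α ^ 2))) *
            Real.exp ((4 * r * r₀ / α ^ 2) * Real.cos θ)) (fun θ _ => hfun θ)]
    rw [← integral_Ioc_eq_integral_Ioo,
      ← intervalIntegral.integral_of_le (by linarith : -Real.pi ≤ Real.pi)]
    rw [intervalIntegral.integral_sub intervalIntegrable_const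
      (by apply Continuous.intervalIntegrable; continuity)]
    rw [intervalIntegral.integral_const, intervalIntegral.integral_const_mul, integral_expcos,
      smul_eq_mul]
    ring
  -- rewrite and compute
  rw [step1, step2, Measure.volume_eq_prod, ← Measure.prod_restrict, integral_prod _ hGint]
  rw [setIntegral_congr_fun measurableSet_Ioi (g := fun r =>
    (2 * Real.pi * (P * lam)) *
      (r * min 1 (r ^ (-β)) -
        r * min 1 (r ^ (-β)) *
          (Real.exp (-(2 * (r^2 + r₀^2) / α ^ 2)) * besselI0 (4 * r * r₀ / α ^ 2)))) hinner]
  -- integrability of v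
  set v : ℝ → ℝ := fun r =>
    r * min 1 (r ^ (-β)) *
      (Real.exp (-(2 * (r^2 + r₀^2) / α ^ 2)) * besselI0 (4 * r * r₀ / α ^ 2)) with hv
  have hw01 : ∀ r ∈ Ioi (0:ℝ),
      0 ≤ Real.exp (-(2 * (r^2 + r₀^2) / α ^ 2)) * besselI0 (4 * r * r₀ / α ^ 2) ∧
      Real.exp (-(2 * (r^2 + r₀^2) / α ^ 2)) * besselI0 (4 * r * r₀ / α ^ 2) ≤ 1 := by
    intro r hr
    have hrp : (0:ℝ) < r := hr
    have hz : (0:ℝ) ≤ 4 * r * r₀ / α ^ 2 := by positivity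
    constructor
    · exact mul_nonneg (Real.exp_pos _).le (besselI0_nonneg _)
    · calc Real.exp (-(2 * (r^2 + r₀^2) / α ^ 2)) * besselI0 (4 * r * r₀ / α ^ 2)
          ≤ Real.exp (-(2 * (r^2 + r₀^2) / α ^ 2)) * Real.exp (4 * r * r₀ / α ^ 2) :=
            mul_le_mul_of_nonneg_left (besselI0_le _ hz) (Real.exp_pos _).le
        _ = Real.exp (-(2 * (r^2 + r₀^2) / α ^ 2) + 4 * r * r₀ / α ^ 2) := (Real.exp_add _ _).symm
        _ ≤ 1 := by
            rw [Real.exp_le_one_iff]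
            have heq : -(2 * (r^2 + r₀^2) / α ^ 2) + 4 * r * r₀ / α ^ 2
                = -(2 * (r - r₀)^2) / α ^ 2 := by ring
            rw [heq]
            apply div_nonpos_of_nonpos_of_nonneg _ hα2.le
            nlinarith [sq_nonneg (r - r₀)]
  have hvmeas : Measurable v := by
    apply Measurable.mul
    · measurability
    · apply Measurable.mul
      · apply Real.measurable_exp.comp; measurability
      · exact (besselI0_continuous.comp (by continuity)).measurable
  have hvint : IntegrableOn v (Ioi (0:ℝ)) := by
    apply Integrable.mono' (phi0_integrableOn hβ) hvmeas.aestronglyMeasurable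
    filter_upwards [ae_restrict_mem measurableSet_Ioi] with r hr
    have hrp : (0:ℝ) < r := hr
    have hmn : 0 ≤ min 1 (r ^ (-β)) := le_min zero_le_one (Real.rpow_nonneg hrp.le _)
    obtain ⟨hw0, hw1⟩ := hw01 r hr
    rw [Real.norm_eq_abs, hv]
    rw [abs_of_nonneg (mul_nonneg (mul_nonneg hrp.le hmn) hw0)]
    calc r * min 1 (r ^ (-β)) * (Real.exp (-(2 * (r^2 + r₀^2) / α ^ 2)) * besselI0 (4 * r * r₀ / α ^ 2))
        ≤ r * min 1 (r ^ (-β)) * 1 := mul_le_mul_of_nonneg_left hw1 (mul_nonneg hrp.le hmn)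
      _ = r * min 1 (r ^ (-β)) := mul_one _
  -- split the integral
  rw [MeasureTheory.integral_const_mul]
  rw [integral_sub (phi0_integrableOn hβ) hvint]
  rw [phi0_integral hβ]
  -- compute ∫ v
  have hvsplit : ∫ r in Ioi (0:ℝ), v r = (∫ r in Ioc (0:ℝ) 1, v r) + ∫ r in Ioi (1:ℝ), v r := by
    rw [← Ioc_union_Ioi_eq_Ioi (zero_le_one (α := ℝ)),
      setIntegral_union Ioc_disjoint_Ioi_same measurableSet_Ioi
        (hvint.mono_set (by rw [← Ioc_union_Ioi_eq_Ioi (zero_le_one (α := ℝ))]; exact subset_union_left))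
        (hvint.mono_set (by rw [← Ioc_union_Ioi_eq_Ioi (zero_le_one (α := ℝ))]; exact subset_union_right))]
  have hexp2 : ∀ r : ℝ, Real.exp (-(2 * (r^2 + r₀^2) / α ^ 2))
      = Real.exp (-(2 * r₀ ^ 2 / α ^ 2)) * Real.exp (-(2 * r ^ 2 / α ^ 2)) := by
    intro r
    rw [← Real.exp_add]
    congr 1
    field_simp
    ring
  have hv1 : ∫ r in Ioc (0:ℝ) 1, v r
      = Real.exp (-(2 * r₀ ^ 2 / α ^ 2)) *
          ∫ r in (0:ℝ)..1, Real.exp (-(2 * r ^ 2 / α ^ 2)) * besselI0 (4 * r * r₀ / α ^ 2) * r := by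
    rw [setIntegral_congr_fun measurableSet_Ioc (g := fun r =>
      Real.exp (-(2 * r₀ ^ 2 / α ^ 2)) *
        (Real.exp (-(2 * r ^ 2 / α ^ 2)) * besselI0 (4 * r * r₀ / α ^ 2) * r))
      (fun r hr => by
        rw [hv]
        simp only
        rw [min_eq_one (by linarith) hr, hexp2 r]
        ring)]
    rw [MeasureTheory.integral_const_mul, intervalIntegral.integral_of_le zero_le_one]
  have hv2 : ∫ r in Ioi (1:ℝ), v r
      = Real.exp (-(2 * r₀ ^ 2 / α ^ 2)) *
          ∫ r in Ioi (1:ℝ), Real.exp (-(2 * r ^ 2 / α ^ 2)) * r ^ (1 - β) *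
            besselI0 (4 * r * r₀ / α ^ 2) := by
    rw [setIntegral_congr_fun measurableSet_Ioi (g := fun r =>
      Real.exp (-(2 * r₀ ^ 2 / α ^ 2)) *
        (Real.exp (-(2 * r ^ 2 / α ^ 2)) * r ^ (1 - β) * besselI0 (4 * r * r₀ / α ^ 2)))
      (fun r hr => by
        rw [hv]
        simp only
        rw [min_eq_rpow (by linarith) hr, rmul_rpow (lt_trans one_pos hr), hexp2 r]
        ring)]
    rw [MeasureTheory.integral_const_mul]
  rw [hvsplit, hv1, hv2]
  have hb2 : β - 2 ≠ 0 := by linarith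
  field_simp
  ring
end
end

section
/- Fix λ > 0, α > 0 and ν > 0, and let φ(x) = λ·(να²/(2πΓ(2/ν)))·exp(−‖αx‖^ν) on ℝ² be the spectral density of the Generalized Gamma determinantal point process, where Γ denotes the Euler Gamma function. Then the repulsiveness measure μ = (1/λ) ∫_{ℝ²} |φ(x)|² dx equals λνα²/(2^{1+2/ν} π Γ(2/ν)). -/
open MeasureTheory
open scoped Real

noncomputable section

/-- The repulsiveness measure of the Generalized Gamma DPP with
spectral density `φ(x) = λ (να²/(2πΓ(2/ν))) e^{−‖αx‖^ν}`:
`μ = (1/λ) ∫_{ℝ²} |φ(x)|² dx = λνα²/(2^{1+2/ν} π Γ(2/ν))`. -/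
theorem stmt_18 (lam α ν : ℝ) (hlam : 0 < lam) (hα : 0 < α) (hν : 0 < ν) :
    (1 / lam) *
        ∫ x : E2,
          |lam * (ν * α ^ 2 / (2 * Real.pi * Real.Gamma (2 / ν))) *
              Real.exp (-‖α • x‖ ^ ν)| ^ 2 =
      lam * ν * α ^ 2 /
        (2 ^ ((1 : ℝ) + 2 / ν) * Real.pi * Real.Gamma (2 / ν)) := by
  have hπ : 0 < Real.pi := Real.pi_pos
  have hΓ : 0 < Real.Gamma (2 / ν) := Real.Gamma_pos_of_pos (by positivity)
  set c : ℝ := lam * (ν * α ^ 2 / (2 * Real.pi * Real.Gamma (2 / ν))) with hc_def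
  have hc : 0 < c := by positivity
  -- rewrite integrand as a function of the norm
  have hb : (0 : ℝ) < 2 * α ^ ν := by positivity
  have hkey : ∀ x : E2, |c * Real.exp (-‖α • x‖ ^ ν)| ^ 2
      = c ^ 2 * Real.exp (-(2 * α ^ ν) * ‖x‖ ^ ν) := by
    intro x
    have hnorm : ‖α • x‖ = α * ‖x‖ := by
      rw [norm_smul, Real.norm_eq_abs, abs_of_pos hα]
    have h1 : ‖α • x‖ ^ ν = α ^ ν * ‖x‖ ^ ν := by
      rw [hnorm, Real.mul_rpow hα.le (norm_nonneg x)]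
    rw [abs_of_pos (by positivity), mul_pow, ← Real.exp_nat_mul, h1]
    ring_nf
  simp only [hkey]
  -- apply the polar-coordinates formula
  have hdim : Module.finrank ℝ E2 = 2 := finrank_euclideanSpace_fin
  have hball : (volume (Metric.ball (0 : E2) 1)).toReal = Real.pi := by
    rw [EuclideanSpace.volume_ball]
    simp only [Fintype.card_fin]
    rw [ENNReal.ofReal_one, one_pow, one_mul]
    rw [show ((2 : ℕ) : ℝ) / 2 + 1 = 2 by norm_num, Real.Gamma_two]
    rw [Real.sq_sqrt hπ.le, div_one, ENNReal.toReal_ofReal hπ.le]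
  have hpolar := MeasureTheory.integral_fun_norm_addHaar (volume : Measure E2)
    (fun r : ℝ => c ^ 2 * Real.exp (-(2 * α ^ ν) * r ^ ν))
  rw [hpolar, hdim, measureReal_def, hball]
  have hioi : ∫ y in Set.Ioi (0 : ℝ), y ^ (2 - 1) •
        (c ^ 2 * Real.exp (-(2 * α ^ ν) * y ^ ν))
      = c ^ 2 * ((2 * α ^ ν) ^ (-(2 : ℝ) / ν) * (1 / ν) * Real.Gamma (2 / ν)) := by
    have h1 : ∀ y ∈ Set.Ioi (0 : ℝ), y ^ (2 - 1) •
          (c ^ 2 * Real.exp (-(2 * α ^ ν) * y ^ ν))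
        = c ^ 2 * (y ^ (1 : ℝ) * Real.exp (-(2 * α ^ ν) * y ^ ν)) := by
      intro y hy
      rw [Real.rpow_one]
      simp [smul_eq_mul]
      ring
    rw [setIntegral_congr_fun measurableSet_Ioi h1, integral_const_mul,
      integral_rpow_mul_exp_neg_mul_rpow hν (by norm_num) hb]
    norm_num
  rw [hioi]
  -- algebraic simplification
  have h2 : (2 * α ^ ν) ^ (-(2 : ℝ) / ν)
      = ((2 : ℝ) ^ ((2 : ℝ) / ν))⁻¹ * (α ^ 2)⁻¹ := by
    have ha : (α ^ ν) ^ (-(2 : ℝ) / ν) = (α ^ 2)⁻¹ := by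
      rw [← Real.rpow_natCast α 2, ← Real.rpow_neg hα.le, ← Real.rpow_mul hα.le]
      congr 1; push_cast; field_simp
    have h2' : (2 : ℝ) ^ (-(2 : ℝ) / ν) = ((2 : ℝ) ^ ((2 : ℝ) / ν))⁻¹ := by
      rw [neg_div, Real.rpow_neg (by norm_num : (0:ℝ) ≤ 2)]
    rw [Real.mul_rpow (by norm_num) (by positivity), ha, h2']
  have h3 : (2 : ℝ) ^ ((1 : ℝ) + 2 / ν) = 2 * (2 : ℝ) ^ ((2 : ℝ) / ν) := by
    rw [Real.rpow_add (by norm_num), Real.rpow_one]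
  have hA : (0 : ℝ) < (2 : ℝ) ^ ((2 : ℝ) / ν) := by positivity
  rw [h2, h3, hc_def]
  simp only [smul_eq_mul, nsmul_eq_mul]
  field_simp
  ring
end
end
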